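/- Let a, n be positive integers with 1 ≤ a < n and gcd(a,n) = 1. Then | (V(a,n) + 1) − (n/a)·Σ_{s=1}^{a} φ(s)/s | ≤ Σ_{d=1}^{a} μ(d)²·⌊a/d⌋ ≤ a·(1 + log a), where the inequality is between real numbers and log is the natural logarithm. In particular the error term is O(a·log a), so if a = O(n^{1−ε}) then V(a,n)/n = (1/a)·Σ_{s=1}^{a} φ(s)/s + o(1). -/

import Mathlib

/-- `(x, y) ∈ ℤ²` lies in the interior of the lattice parallelogram
`P_{a,n} = {t₁·(1,0) + t₂·(a,n) : 0 ≤ t₁, t₂ ≤ 1}`. -/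
def inInteriorP (a n : ℤ) (p : ℤ × ℤ) : Prop :=
  ∃ t₁ t₂ : ℝ, 0 < t₁ ∧ t₁ < 1 ∧ 0 < t₂ ∧ t₂ < 1 ∧
    (p.1 : ℝ) = t₁ + t₂ * (a : ℝ) ∧ (p.2 : ℝ) = t₂ * (n : ℝ)

/-- A lattice point `(x, y) ∈ ℤ²` is visible (from the origin) if `gcd(x, y) = 1`. -/
def VisiblePt (p : ℤ × ℤ) : Prop := Int.gcd p.1 p.2 = 1

/-- `V a n` is the number of visible lattice points in the interior of `P_{a,n}`. -/
noncomputable def V (a n : ℤ) : ℕ :=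
  {p : ℤ × ℤ | inInteriorP a n p ∧ VisiblePt p}.ncard

/-- Characterization of interior points by integer inequalities. -/
lemma inInteriorP_iff (a n : ℤ) (hn : 0 < n) (p : ℤ × ℤ) :
    inInteriorP a n p ↔
      0 < p.2 ∧ p.2 < n ∧ (p.1 - 1) * n < a * p.2 ∧ a * p.2 < p.1 * n := by
  obtain ⟨x, y⟩ := p
  have hn' : (0:ℝ) < (n:ℝ) := by exact_mod_cast hn
  constructor
  · rintro ⟨t₁, t₂, h1, h2, h3, h4, hx, hy⟩
    simp only at hx hy
    have ht₂ : t₂ = (y:ℝ) / n := eq_div_of_mul_eq (ne_of_gt hn') hy.symm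
    have hy1 : 0 < (y:ℝ) := by rw [hy]; positivity
    have hy2 : (y:ℝ) < n := by
      rw [hy]; nlinarith
    have ht₁ : t₁ = (x:ℝ) - t₂ * a := by linarith [hx]
    refine ⟨by exact_mod_cast hy1, by exact_mod_cast hy2, ?_, ?_⟩
    · -- (x-1)*n < a*y
      have : t₁ < 1 := h2
      rw [ht₁, ht₂] at this
      have hc : (y:ℝ) / n * a * n = y * a := by field_simp
      have : ((x:ℝ) - 1) * n < a * y := by nlinarith [this, hc]
      exact_mod_cast this
    · have : 0 < t₁ := h1
      rw [ht₁, ht₂] at this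
      have hc : (y:ℝ) / n * a * n = y * a := by field_simp
      have : (a:ℝ) * y < x * n := by nlinarith [this, hc]
      exact_mod_cast this
  · rintro ⟨h1, h2, h3, h4⟩
    simp only at h1 h2 h3 h4
    have h1' : (0:ℝ) < y := by exact_mod_cast h1
    have h2' : (y:ℝ) < n := by exact_mod_cast h2
    have h3' : ((x:ℝ) - 1) * n < a * y := by exact_mod_cast h3
    have h4' : (a:ℝ) * y < x * n := by exact_mod_cast h4
    refine ⟨(x:ℝ) - (a * y) / n, (y:ℝ)/n, ?_, ?_, ?_, ?_, ?_, ?_⟩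
    · rw [sub_pos, div_lt_iff₀ hn']; linarith
    · have := (lt_div_iff₀ hn').mpr h3'
      have hc : (a:ℝ) * y / n = a * y / n := rfl
      rw [sub_lt_iff_lt_add]
      linarith
    · positivity
    · rw [div_lt_one hn']; exact h2'
    · simp only; field_simp; ring
    · simp only; field_simp

/-- The half-open count finset in ℕ (including the extra corner point (a,n)). -/
def HN (a n : ℕ) : Finset (ℕ × ℕ) :=
  (Finset.Icc 1 a ×ˢ Finset.Icc 1 n).filter
    (fun p => (p.1 - 1) * n < a * p.2 ∧ a * p.2 ≤ p.1 * n ∧ Nat.gcd p.1 p.2 = 1)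

lemma V_add_one (a n : ℕ) (ha : 1 ≤ a) (han : a < n) (hgcd : Nat.gcd a n = 1) :
    V a n + 1 = (HN a n).card := by
  have hn : 0 < n := lt_of_le_of_lt (Nat.zero_le a) han
  -- the visible interior set equals the image of `(HN a n).erase (a,n)`
  have hset : {p : ℤ × ℤ | inInteriorP a n p ∧ VisiblePt p} =
      ↑(((HN a n).erase (a, n)).image (fun p : ℕ × ℕ => ((p.1 : ℤ), (p.2 : ℤ)))) := by
    ext ⟨x, y⟩
    simp only [Set.mem_setOf_eq, Finset.coe_image, Set.mem_image, Finset.mem_coe,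
      Finset.mem_erase, HN, Finset.mem_filter, Finset.mem_product, Finset.mem_Icc]
    rw [inInteriorP_iff _ _ (by exact_mod_cast hn), VisiblePt]
    constructor
    · rintro ⟨⟨h1, h2, h3, h4⟩, h5⟩
      simp only at h1 h2 h3 h4 h5
      have hx1 : 1 ≤ x := by nlinarith [h1, h4, (by exact_mod_cast hn : (0:ℤ) < n), (by exact_mod_cast ha : (1:ℤ) ≤ a)]
      have hxa : x ≤ (a:ℤ) := by nlinarith [h2, h3, (by exact_mod_cast hn : (0:ℤ) < n), (by exact_mod_cast ha : (1:ℤ) ≤ a)]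
      refine ⟨(x.toNat, y.toNat), ⟨?_, ?_⟩, ?_⟩
      · -- not the corner
        intro hcontra
        have : y.toNat = n := (Prod.mk.injEq _ _ _ _ ▸ hcontra).2
        have : y = (n:ℤ) := by omega
        omega
      · have hxt : (x.toNat : ℤ) = x := Int.toNat_of_nonneg (by omega)
        have hyt : (y.toNat : ℤ) = y := Int.toNat_of_nonneg (by omega)
        refine ⟨⟨⟨by omega, by omega⟩, by omega, by omega⟩, ?_, ?_, ?_⟩
        · zify; rw [Nat.cast_sub (by omega : 1 ≤ x.toNat)]; push_cast [hxt, hyt]; omega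
        · zify; push_cast [hxt, hyt]; omega
        · rw [← Int.gcd_natCast_natCast, hxt, hyt]; exact h5
      · simp [Int.toNat_of_nonneg (by omega : (0:ℤ) ≤ x), Int.toNat_of_nonneg (by omega : (0:ℤ) ≤ y)]
    · rintro ⟨⟨u, v⟩, ⟨hne, ⟨⟨hu1, hua⟩, hv1, hvn⟩, hlt, hle, hg⟩, heq⟩
      simp only [Prod.mk.injEq] at heq hne
      obtain ⟨hex, hey⟩ := heq
      subst hex; subst hey
      have h1 : (u - 1) * n < a * v := hlt
      have hne' : a * v ≠ u * n := by
        intro hcontra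
        have hdvd : a ∣ u * n := ⟨v, hcontra.symm⟩
        have : a ∣ u := (Nat.Coprime.dvd_of_dvd_mul_right (show Nat.Coprime a n from hgcd) hdvd)
        have hua' : u = a := Nat.le_antisymm hua (Nat.le_of_dvd (by omega) this)
        subst hua'
        have : v = n := by
          have := Nat.eq_of_mul_eq_mul_left (show 0 < u by omega) hcontra
          omega
        exact hne (by rw [this])
      simp only at hu1 hua hv1 hvn hlt hle hg
      have hvlt : v < n := by
        rcases eq_or_lt_of_le hvn with h | h
        · exfalso
          subst h
          have hau : a ≤ u := Nat.le_of_mul_le_mul_right (by linarith [hle]) hn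
          have : u = a := le_antisymm hua hau
          subst this
          exact hne' rfl
        · exact h
      dsimp only
      refine ⟨⟨?_, ?_, ?_, ?_⟩, ?_⟩
      · exact_mod_cast hv1
      · exact_mod_cast hvlt
      · have : ((u:ℤ) - 1) * n < a * v := by
          have : ((u - 1 : ℕ) : ℤ) * n < a * v := by exact_mod_cast hlt
          rw [Nat.cast_sub hu1] at this; exact_mod_cast this
        exact_mod_cast this
      · have : a * v < u * n := lt_of_le_of_ne hle hne'
        exact_mod_cast this
      · show Int.gcd _ _ = 1
        simp only [Int.gcd_natCast_natCast]; exact hg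
  have hinj : Set.InjOn (fun p : ℕ × ℕ => ((p.1 : ℤ), (p.2 : ℤ))) ↑((HN a n).erase (a, n)) := by
    intro p _ q _ h
    simp only [Prod.mk.injEq] at h
    exact Prod.ext (by exact_mod_cast h.1) (by exact_mod_cast h.2)
  have hcorner : (a, n) ∈ HN a n := by
    simp only [HN, Finset.mem_filter, Finset.mem_product, Finset.mem_Icc]
    refine ⟨⟨⟨ha, le_refl a⟩, ⟨by omega, le_refl n⟩⟩, ?_, le_refl _, hgcd⟩
    exact (Nat.mul_lt_mul_right hn).mpr (by omega)
  rw [V, hset, Set.ncard_coe_finset, Finset.card_image_of_injOn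
    (by exact_mod_cast hinj), Finset.card_erase_of_mem hcorner]
  have hcard : 0 < (HN a n).card := Finset.card_pos.mpr ⟨_, hcorner⟩
  omega

/-- Number of `y` in the half-open strip for a given column `x`. -/
def cnt (a n x : ℕ) : ℕ :=
  ((Finset.Icc 1 n).filter
    (fun y => (x - 1) * n < a * y ∧ a * y ≤ x * n ∧ Nat.gcd x y = 1)).card

lemma HN_card (a n : ℕ) :
    (HN a n).card = ∑ x ∈ Finset.Icc 1 a, cnt a n x := by
  rw [Finset.card_eq_sum_card_fiberwise
    (f := fun p : ℕ × ℕ => p.1) (t := Finset.Icc 1 a)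
    (fun p hp => by
      exact (Finset.mem_product.mp (Finset.mem_filter.mp hp).1).1)]
  refine Finset.sum_congr rfl (fun x hx => ?_)
  have hinj : Function.Injective (fun y : ℕ => (x, y)) :=
    fun y z h => by simpa using congrArg Prod.snd h
  have hEq : Finset.filter (fun p : ℕ × ℕ => p.1 = x) (HN a n) =
      ((Finset.Icc 1 n).filter
        (fun y => (x - 1) * n < a * y ∧ a * y ≤ x * n ∧ Nat.gcd x y = 1)).image
        (fun y => (x, y)) := by
    ext ⟨u, v⟩
    simp only [HN, Finset.mem_filter, Finset.mem_product, Finset.mem_image, Finset.mem_Icc,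
      Prod.mk.injEq]
    constructor
    · rintro ⟨⟨⟨hu, hv⟩, h1, h2, h3⟩, hux⟩
      subst hux
      exact ⟨v, ⟨hv, h1, h2, h3⟩, rfl, rfl⟩
    · rintro ⟨y, ⟨hy, h1, h2, h3⟩, hxu, hyv⟩
      subst hxu; subst hyv
      exact ⟨⟨⟨Finset.mem_Icc.mp hx, hy⟩, h1, h2, h3⟩, rfl⟩
  rw [hEq, Finset.card_image_of_injective _ hinj, cnt]

open ArithmeticFunction ArithmeticFunction.Moebius in
lemma sum_moebius_divisors (m : ℕ) :
    ∑ d ∈ m.divisors, μ d = if m = 1 then 1 else 0 := by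
  have h := moebius_mul_coe_zeta
  rw [ArithmeticFunction.ext_iff] at h
  have h2 := h m
  rwa [coe_mul_zeta_apply, one_apply] at h2

open ArithmeticFunction ArithmeticFunction.Moebius in
lemma gcd_indicator (x y : ℕ) (hx : x ≠ 0) :
    (if Nat.gcd x y = 1 then (1 : ℤ) else 0) =
      ∑ d ∈ x.divisors.filter (· ∣ y), μ d := by
  have hset : x.divisors.filter (· ∣ y) = (Nat.gcd x y).divisors := by
    ext d
    simp only [Finset.mem_filter, Nat.mem_divisors, Nat.dvd_gcd_iff]
    constructor
    · rintro ⟨⟨h1, _⟩, h2⟩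
      exact ⟨⟨h1, h2⟩, fun hc => hx (Nat.eq_zero_of_gcd_eq_zero_left hc)⟩
    · rintro ⟨⟨h1, h2⟩, _⟩
      exact ⟨⟨h1, hx⟩, h2⟩
  rw [hset, sum_moebius_divisors]

lemma count_multiples (a n x d : ℕ) (hx : 1 ≤ x) (hxa : x ≤ a) (ha : 1 ≤ a)
    (hd : 1 ≤ d) :
    (((Finset.Icc 1 n).filter
        (fun y => ((x - 1) * n < a * y ∧ a * y ≤ x * n) ∧ d ∣ y)).card
      = x * n / (a * d) - (x - 1) * n / (a * d)) := by
  have had : 0 < a * d := Nat.mul_pos ha hd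
  rw [← Nat.card_Ioc ((x - 1) * n / (a * d)) (x * n / (a * d))]
  apply Finset.card_bij' (fun y _ => y / d) (fun z _ => d * z)
  · -- maps into Ioc
    intro y hy
    simp only [Finset.mem_filter, Finset.mem_Icc] at hy
    obtain ⟨⟨hy1, hyn⟩, ⟨h1, h2⟩, hdy⟩ := hy
    rw [Finset.mem_Ioc]
    constructor
    · rw [Nat.div_lt_iff_lt_mul had]
      calc (x - 1) * n < a * y := h1
      _ = y / d * (a * d) := by
          rw [show y / d * (a * d) = a * (d * (y / d)) by ring, Nat.mul_div_cancel' hdy]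
    · rw [Nat.le_div_iff_mul_le had]
      calc y / d * (a * d) = a * (d * (y / d)) := by ring
      _ = a * y := by rw [Nat.mul_div_cancel' hdy]
      _ ≤ x * n := h2
  · -- maps back
    intro z hz
    rw [Finset.mem_Ioc] at hz
    obtain ⟨hz1, hz2⟩ := hz
    have h1 : (x - 1) * n < a * (d * z) := by
      have := (Nat.div_lt_iff_lt_mul had).mp hz1
      calc (x - 1) * n < z * (a * d) := this
      _ = a * (d * z) := by ring
    have h2 : a * (d * z) ≤ x * n := by
      have := (Nat.le_div_iff_mul_le had).mp hz2
      calc a * (d * z) = z * (a * d) := by ring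
      _ ≤ x * n := this
    simp only [Finset.mem_filter, Finset.mem_Icc]
    refine ⟨⟨?_, ?_⟩, ⟨h1, h2⟩, Dvd.intro z rfl⟩
    · have hz0 : 0 < z := by
        rcases Nat.eq_zero_or_pos z with h | h
        · subst h; simp at h1
        · exact h
      exact Nat.one_le_iff_ne_zero.mpr (by positivity)
    · -- d * z ≤ n
      have : a * (d * z) ≤ a * n := le_trans h2 (Nat.mul_le_mul_right n hxa)
      exact Nat.le_of_mul_le_mul_left this ha
  · intro y hy
    simp only [Finset.mem_filter] at hy
    exact Nat.mul_div_cancel' hy.2.2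
  · intro z _
    exact Nat.mul_div_cancel_left z hd

open ArithmeticFunction ArithmeticFunction.Moebius in
lemma cnt_eq (a n x : ℕ) (hx : 1 ≤ x) (hxa : x ≤ a) (ha : 1 ≤ a) :
    (cnt a n x : ℤ) = ∑ d ∈ x.divisors,
      μ d * ((x * n / (a * d) : ℕ) - ((x - 1) * n / (a * d) : ℕ) : ℤ) := by
  have hx0 : x ≠ 0 := by omega
  rw [cnt]
  have hfilter : (Finset.Icc 1 n).filter
      (fun y => (x - 1) * n < a * y ∧ a * y ≤ x * n ∧ Nat.gcd x y = 1)
      = ((Finset.Icc 1 n).filter (fun y => (x - 1) * n < a * y ∧ a * y ≤ x * n)).filter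
        (fun y => Nat.gcd x y = 1) := by
    rw [Finset.filter_filter]
    congr 1
    ext y
    tauto
  rw [hfilter]
  set Y := (Finset.Icc 1 n).filter (fun y => (x - 1) * n < a * y ∧ a * y ≤ x * n) with hY
  have : ((Y.filter (fun y => Nat.gcd x y = 1)).card : ℤ)
      = ∑ y ∈ Y, if Nat.gcd x y = 1 then (1:ℤ) else 0 := by
    simp [Finset.sum_boole]
  rw [this]
  have : ∀ y ∈ Y, (if Nat.gcd x y = 1 then (1:ℤ) else 0)
      = ∑ d ∈ x.divisors, if d ∣ y then μ d else 0 := by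
    intro y _
    rw [gcd_indicator x y hx0, Finset.sum_filter]
  rw [Finset.sum_congr rfl this, Finset.sum_comm]
  refine Finset.sum_congr rfl (fun d hd => ?_)
  rw [Nat.mem_divisors] at hd
  have hd1 : 1 ≤ d := Nat.one_le_iff_ne_zero.mpr (fun h => by
    subst h; exact hx0 (Nat.eq_zero_of_zero_dvd hd.1))
  rw [← Finset.sum_filter]
  have : (Y.filter (fun y => d ∣ y)) = ((Finset.Icc 1 n).filter
      (fun y => ((x - 1) * n < a * y ∧ a * y ≤ x * n) ∧ d ∣ y)) := by
    rw [hY, Finset.filter_filter]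
  rw [Finset.sum_const, this, count_multiples a n x d hx hxa ha hd1]
  have hmono : (x - 1) * n / (a * d) ≤ x * n / (a * d) :=
    Nat.div_le_div_right (Nat.mul_le_mul_right n (by omega))
  rw [nsmul_eq_mul, Nat.cast_sub hmono]
  ring

open ArithmeticFunction ArithmeticFunction.Moebius in
lemma totient_int_eq (x : ℕ) (hx : 0 < x) :
    (Nat.totient x : ℤ) = ∑ d ∈ x.divisors, μ d * ((x / d : ℕ) : ℤ) := by
  have key := (sum_eq_iff_sum_smul_moebius_eq
    (f := fun i : ℕ => (Nat.totient i : ℤ)) (g := fun i : ℕ => (i : ℤ))).mp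
    (fun m hm => by exact_mod_cast congrArg (Nat.cast : ℕ → ℤ) (Nat.sum_totient m))
    x hx
  rw [← key, Nat.sum_divisorsAntidiagonal (f := fun i j => μ i • (j : ℤ))]
  simp [smul_eq_mul]

open ArithmeticFunction ArithmeticFunction.Moebius in
lemma totient_div_eq (x : ℕ) (hx : 0 < x) :
    (Nat.totient x : ℝ) / x = ∑ d ∈ x.divisors, (μ d : ℝ) / d := by
  have h := totient_int_eq x hx
  have h' : (Nat.totient x : ℝ) = ∑ d ∈ x.divisors, (μ d : ℝ) * ((x / d : ℕ) : ℝ) := by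
    rw [show ((Nat.totient x : ℝ)) = ((Nat.totient x : ℤ) : ℝ) by norm_cast, h,
      Int.cast_sum]
    exact Finset.sum_congr rfl (fun d hd => by rw [Int.cast_mul, Int.cast_natCast])
  have hx0 : (x : ℝ) ≠ 0 := Nat.cast_ne_zero.mpr hx.ne'
  rw [h', Finset.sum_div]
  refine Finset.sum_congr rfl (fun d hd => ?_)
  rw [Nat.mem_divisors] at hd
  have hd0 : (d : ℝ) ≠ 0 := Nat.cast_ne_zero.mpr (fun h0 => hd.2 (by
    subst h0; exact Nat.eq_zero_of_zero_dvd hd.1))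
  rw [Nat.cast_div hd.1 hd0]
  field_simp

open ArithmeticFunction ArithmeticFunction.Moebius in
lemma abs_moebius_le_sq (d : ℕ) : |(μ d : ℝ)| ≤ (μ d : ℝ) ^ 2 := by
  by_cases h : Squarefree d
  · rw [moebius_apply_of_squarefree h]
    rcases Nat.even_or_odd (cardFactors d) with he | ho
    · rw [he.neg_one_pow]; norm_num
    · rw [ho.neg_one_pow]; norm_num
  · rw [moebius_eq_zero_of_not_squarefree h]; norm_num

lemma nat_div_real_bounds (u c : ℕ) (hc : 0 < c) :
    (u : ℝ) / c - 1 < ((u / c : ℕ) : ℝ) ∧ ((u / c : ℕ) : ℝ) ≤ (u : ℝ) / c := by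
  have hc' : (0 : ℝ) < c := by exact_mod_cast hc
  constructor
  · have hmod := Nat.div_add_mod u c
    have hlt : u % c < c := Nat.mod_lt u hc
    have : (u : ℝ) < c * ((u / c : ℕ) : ℝ) + c := by
      have : (u : ℝ) = c * ((u / c : ℕ) : ℝ) + ((u % c : ℕ) : ℝ) := by exact_mod_cast hmod.symm
      rw [this]
      have : ((u % c : ℕ) : ℝ) < c := by exact_mod_cast hlt
      linarith
    rw [div_sub_one (ne_of_gt hc'), div_lt_iff₀ hc']
    nlinarith
  · exact Nat.cast_div_le

open ArithmeticFunction ArithmeticFunction.Moebius in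
lemma cnt_err (a n x : ℕ) (hx : 1 ≤ x) (hxa : x ≤ a) (ha : 1 ≤ a) :
    |(cnt a n x : ℝ) - (n : ℝ) / a * ((Nat.totient x : ℝ) / x)| ≤
      ∑ d ∈ x.divisors, (μ d : ℝ) ^ 2 := by
  have hcnt : (cnt a n x : ℝ) = ∑ d ∈ x.divisors,
      (μ d : ℝ) * (((x * n / (a * d) : ℕ) : ℝ) - (((x - 1) * n / (a * d) : ℕ) : ℝ)) := by
    have := cnt_eq a n x hx hxa ha
    have := congrArg (Int.cast : ℤ → ℝ) this
    simp only [Int.cast_sum, Int.cast_mul, Int.cast_sub, Int.cast_natCast] at this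
    convert this using 2 with d
  have hmain : (n : ℝ) / a * ((Nat.totient x : ℝ) / x)
      = ∑ d ∈ x.divisors, (μ d : ℝ) * ((n : ℝ) / (a * d)) := by
    rw [totient_div_eq x hx, Finset.mul_sum]
    refine Finset.sum_congr rfl (fun d hd => ?_)
    rw [Nat.mem_divisors] at hd
    have hd0 : (d : ℝ) ≠ 0 := Nat.cast_ne_zero.mpr (fun h0 => hd.2 (by
      subst h0; exact Nat.eq_zero_of_zero_dvd hd.1))
    have ha0 : (a : ℝ) ≠ 0 := Nat.cast_ne_zero.mpr (by omega)
    field_simp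
  rw [hcnt, hmain, ← Finset.sum_sub_distrib]
  refine (Finset.abs_sum_le_sum_abs _ _).trans ?_
  refine Finset.sum_le_sum (fun d hd => ?_)
  rw [Nat.mem_divisors] at hd
  have hd1 : 1 ≤ d := Nat.one_le_iff_ne_zero.mpr (fun h0 => by
    subst h0; exact (by omega : ¬ x = 0) (Nat.eq_zero_of_zero_dvd hd.1))
  have had : 0 < a * d := Nat.mul_pos (by omega) hd1
  have had' : (0 : ℝ) < (a * d : ℕ) := by exact_mod_cast had
  rw [← mul_sub, abs_mul]
  refine le_trans (mul_le_mul_of_nonneg_left ?_ (abs_nonneg _))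
    (by rw [mul_one]; exact abs_moebius_le_sq d)
  -- |((B:ℝ) - A) - n/(a*d)| ≤ 1
  have hB := nat_div_real_bounds (x * n) (a * d) had
  have hA := nat_div_real_bounds ((x - 1) * n) (a * d) had
  have hsub : ((x * n : ℕ) : ℝ) - (((x - 1) * n : ℕ) : ℝ) = (n : ℝ) := by
    push_cast [Nat.cast_sub hx]
    ring
  rw [abs_le]
  constructor
  · have h1 := hB.1
    have h2 := hA.2
    have : (n : ℝ) / (a * d) = ((x * n : ℕ) : ℝ) / (a * d : ℕ) -
        (((x - 1) * n : ℕ) : ℝ) / (a * d : ℕ) := by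
      rw [div_sub_div_same, hsub]
      push_cast
      ring_nf
    rw [this]
    linarith
  · have h1 := hB.2
    have h2 := hA.1
    have : (n : ℝ) / (a * d) = ((x * n : ℕ) : ℝ) / (a * d : ℕ) -
        (((x - 1) * n : ℕ) : ℝ) / (a * d : ℕ) := by
      rw [div_sub_div_same, hsub]
      push_cast
      ring_nf
    rw [this]
    linarith

open ArithmeticFunction ArithmeticFunction.Moebius in
lemma sum_divisors_swap (a : ℕ) :
    ∑ x ∈ Finset.Icc 1 a, ∑ d ∈ x.divisors, (μ d : ℝ) ^ 2
      = ∑ d ∈ Finset.Icc 1 a, (μ d : ℝ) ^ 2 * ((a / d : ℕ) : ℝ) := by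
  have hstep : ∀ x ∈ Finset.Icc 1 a, ∑ d ∈ x.divisors, (μ d : ℝ) ^ 2
      = ∑ d ∈ Finset.Icc 1 a, if d ∣ x then (μ d : ℝ) ^ 2 else 0 := by
    intro x hx
    rw [Finset.mem_Icc] at hx
    rw [← Finset.sum_filter]
    apply Finset.sum_congr _ (fun _ _ => rfl)
    ext d
    simp only [Nat.mem_divisors, Finset.mem_filter, Finset.mem_Icc]
    constructor
    · rintro ⟨h1, h2⟩
      refine ⟨⟨Nat.one_le_iff_ne_zero.mpr (fun h0 => h2 (by
        subst h0; exact Nat.eq_zero_of_zero_dvd h1)), le_trans (Nat.le_of_dvd (by omega) h1) hx.2⟩, h1⟩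
    · rintro ⟨⟨h1, h2⟩, h3⟩
      exact ⟨h3, by omega⟩
  rw [Finset.sum_congr rfl hstep, Finset.sum_comm]
  refine Finset.sum_congr rfl (fun d hd => ?_)
  rw [← Finset.sum_filter, Finset.sum_const, nsmul_eq_mul, mul_comm]
  congr 1
  rw [show Finset.Icc 1 a = Finset.Ioc 0 a by rfl]
  rw_mod_cast [Nat.Ioc_filter_dvd_card_eq_div]

lemma floor_cast_div (a d : ℕ) : ((⌊(a : ℝ) / (d : ℝ)⌋ : ℤ) : ℝ) = ((a / d : ℕ) : ℝ) := by
  rcases Nat.eq_zero_or_pos d with h | h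
  · subst h; simp
  · have h0 : (0 : ℝ) ≤ (a : ℝ) / d := by positivity
    rw [← Int.natCast_floor_eq_floor h0]
    norm_cast
    rw [Nat.floor_div_natCast]
    simp

lemma sum_harmonic_bound (a : ℕ) (ha : 1 ≤ a) :
    ∑ d ∈ Finset.Icc 1 a, (a : ℝ) / d ≤ (a : ℝ) * (1 + Real.log a) := by
  have h1 : ∑ d ∈ Finset.Icc 1 a, (a : ℝ) / d = (a : ℝ) * ∑ d ∈ Finset.Icc 1 a, ((d : ℝ))⁻¹ := by
    rw [Finset.mul_sum]
    exact Finset.sum_congr rfl (fun d _ => by rw [div_eq_mul_inv])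
  rw [h1]
  refine mul_le_mul_of_nonneg_left ?_ (by positivity)
  have h2 : ∑ d ∈ Finset.Icc 1 a, ((d : ℝ))⁻¹ = ((harmonic a : ℚ) : ℝ) := by
    rw [harmonic_eq_sum_Icc]
    push_cast
    rfl
  rw [h2]
  exact harmonic_le_one_add_log a

open ArithmeticFunction ArithmeticFunction.Moebius in
lemma moebius_sq_le_one (d : ℕ) : (μ d : ℝ) ^ 2 ≤ 1 := by
  by_cases h : Squarefree d
  · rw [moebius_apply_of_squarefree h]
    rcases Nat.even_or_odd (cardFactors d) with he | ho
    · rw [he.neg_one_pow]; norm_num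
    · rw [ho.neg_one_pow]; norm_num
  · rw [moebius_eq_zero_of_not_squarefree h]; norm_num

open ArithmeticFunction ArithmeticFunction.Moebius in
lemma part_one (a n : ℕ) (ha : 1 ≤ a) (han : a < n) (hgcd : Nat.gcd a n = 1) :
    |((V a n : ℝ) + 1) - (n : ℝ) / (a : ℝ) *
        ∑ s ∈ Finset.Icc 1 a, (Nat.totient s : ℝ) / (s : ℝ)| ≤
      ∑ d ∈ Finset.Icc 1 a, (μ d : ℝ) ^ 2 * (⌊(a : ℝ) / (d : ℝ)⌋ : ℝ) := by
  have hV : (V a n : ℝ) + 1 = ∑ x ∈ Finset.Icc 1 a, (cnt a n x : ℝ) := by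
    have h := V_add_one a n ha han hgcd
    rw [HN_card] at h
    exact_mod_cast congrArg (Nat.cast : ℕ → ℝ) h
  have hmain : (n : ℝ) / a * ∑ s ∈ Finset.Icc 1 a, (Nat.totient s : ℝ) / s
      = ∑ x ∈ Finset.Icc 1 a, (n : ℝ) / a * ((Nat.totient x : ℝ) / x) :=
    Finset.mul_sum _ _ _
  rw [hV, hmain, ← Finset.sum_sub_distrib]
  refine (Finset.abs_sum_le_sum_abs _ _).trans ?_
  have hstep : ∑ x ∈ Finset.Icc 1 a,
      |(cnt a n x : ℝ) - (n : ℝ) / a * ((Nat.totient x : ℝ) / x)|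
      ≤ ∑ x ∈ Finset.Icc 1 a, ∑ d ∈ x.divisors, (μ d : ℝ) ^ 2 := by
    refine Finset.sum_le_sum (fun x hx => ?_)
    rw [Finset.mem_Icc] at hx
    exact cnt_err a n x hx.1 hx.2 ha
  refine hstep.trans ?_
  rw [sum_divisors_swap]
  refine le_of_eq (Finset.sum_congr rfl (fun d _ => ?_))
  rw [floor_cast_div]

open ArithmeticFunction ArithmeticFunction.Moebius in
lemma part_one' (a : ℕ) (ha : 1 ≤ a) :
    ∑ d ∈ Finset.Icc 1 a, (μ d : ℝ) ^ 2 * (⌊(a : ℝ) / (d : ℝ)⌋ : ℝ) ≤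
      (a : ℝ) * (1 + Real.log a) := by
  refine le_trans ?_ (sum_harmonic_bound a ha)
  refine Finset.sum_le_sum (fun d hd => ?_)
  rw [floor_cast_div]
  have h1 : ((a / d : ℕ) : ℝ) ≤ (a : ℝ) / d := Nat.cast_div_le
  have h2 : (0 : ℝ) ≤ ((a / d : ℕ) : ℝ) := Nat.cast_nonneg _
  nlinarith [moebius_sq_le_one d, sq_nonneg ((μ d : ℝ))]

open Filter in
lemma tendsto_aux (ε D : ℝ) (hε : 0 < ε) :
    Tendsto (fun x : ℝ => D * (1 + Real.log D + Real.log x) / x ^ ε + 1 / x)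
      atTop (nhds 0) := by
  have h1 : Tendsto (fun x : ℝ => D * (1 + Real.log D) / x ^ ε) atTop (nhds 0) :=
    Tendsto.div_atTop tendsto_const_nhds (tendsto_rpow_atTop hε)
  have h2 : Tendsto (fun x : ℝ => D * (Real.log x / x ^ ε)) atTop (nhds 0) := by
    have := (isLittleO_log_rpow_atTop hε).tendsto_div_nhds_zero
    simpa using this.const_mul D
  have h3 : Tendsto (fun x : ℝ => 1 / x) atTop (nhds 0) := by
    simpa [one_div] using tendsto_inv_atTop_zero
  have := (h1.add h2).add h3
  simp only [add_zero] at this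
  refine Tendsto.congr (fun x => ?_) this
  ring


open ArithmeticFunction ArithmeticFunction.Moebius Filter in
/-- The error term in the approximation `V(a,n) + 1 ≈ (n/a)·Σ_{s=1}^{a} φ(s)/s`
is at most `Σ_{d=1}^{a} μ(d)²·⌊a/d⌋ ≤ a·(1 + log a)`.  In particular, if
`a = O(n^{1−ε})` along a sequence then `V(a,n)/n − (1/a)·Σ_{s=1}^{a} φ(s)/s → 0`. -/
theorem V_error_bound (a n : ℕ) (ha : 1 ≤ a) (han : a < n)
    (hgcd : Nat.gcd a n = 1) :
    (|((V a n : ℝ) + 1) - (n : ℝ) / (a : ℝ) *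
          ∑ s ∈ Finset.Icc 1 a, (Nat.totient s : ℝ) / (s : ℝ)| ≤
        ∑ d ∈ Finset.Icc 1 a, (μ d : ℝ) ^ 2 * (⌊(a : ℝ) / (d : ℝ)⌋ : ℝ) ∧
      ∑ d ∈ Finset.Icc 1 a, (μ d : ℝ) ^ 2 * (⌊(a : ℝ) / (d : ℝ)⌋ : ℝ) ≤
        (a : ℝ) * (1 + Real.log a)) ∧
    ∀ (ε : ℝ), 0 < ε → ε < 1 →
      ∀ A : ℕ → ℕ,
        (∀ m : ℕ, 2 ≤ m → 1 ≤ A m ∧ A m < m ∧ Nat.gcd (A m) m = 1) →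
        (fun m : ℕ => (A m : ℝ)) =O[atTop] (fun m : ℕ => (m : ℝ) ^ (1 - ε)) →
        Tendsto
          (fun m : ℕ => (V (A m) m : ℝ) / (m : ℝ) -
            1 / (A m : ℝ) * ∑ s ∈ Finset.Icc 1 (A m), (Nat.totient s : ℝ) / (s : ℝ))
          atTop (nhds 0) := by
  refine ⟨⟨part_one a n ha han hgcd, part_one' a ha⟩, ?_⟩
  intro ε hε hε1 A hA hO
  obtain ⟨C, hC, hbound⟩ := hO.exists_pos
  have hb := hbound.bound
  set D := max C 1 with hD
  have hD1 : (1 : ℝ) ≤ D := le_max_right _ _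
  have hlogD : 0 ≤ Real.log D := Real.log_nonneg hD1
  -- the squeeze function
  set g : ℕ → ℝ := fun m =>
    (D * (m : ℝ) ^ (1 - ε) * (1 + Real.log D + Real.log m) + 1) / m with hg
  have hsqueeze : ∀ᶠ m : ℕ in atTop,
      ‖(V (A m) m : ℝ) / (m : ℝ) -
        1 / (A m : ℝ) * ∑ s ∈ Finset.Icc 1 (A m), (Nat.totient s : ℝ) / (s : ℝ)‖ ≤ g m := by
    filter_upwards [hb, eventually_ge_atTop 2] with m hbm hm2
    obtain ⟨ha1, ham, hgm⟩ := hA m hm2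
    have hm0 : (0 : ℝ) < m := by positivity
    have ha0 : (0 : ℝ) < (A m : ℝ) := by exact_mod_cast ha1
    have hrpow_pos : (0 : ℝ) < (m : ℝ) ^ (1 - ε) := by positivity
    have hAD : (A m : ℝ) ≤ D * (m : ℝ) ^ (1 - ε) := by
      have h1 : ‖(A m : ℝ)‖ = (A m : ℝ) := by
        rw [Real.norm_eq_abs, abs_of_nonneg (le_of_lt ha0)]
      have h2 : ‖(m : ℝ) ^ (1 - ε)‖ = (m : ℝ) ^ (1 - ε) := by
        rw [Real.norm_eq_abs, abs_of_pos hrpow_pos]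
      rw [h1, h2] at hbm
      calc (A m : ℝ) ≤ C * (m : ℝ) ^ (1 - ε) := hbm
      _ ≤ D * (m : ℝ) ^ (1 - ε) := by
          exact mul_le_mul_of_nonneg_right (le_max_left _ _) (le_of_lt hrpow_pos)
    -- error bound at (A m, m)
    have herr := part_one (A m) m ha1 ham hgm
    have herr2 := part_one' (A m) ha1
    have hE : |((V (A m) m : ℝ) + 1) - (m : ℝ) / (A m : ℝ) *
        ∑ s ∈ Finset.Icc 1 (A m), (Nat.totient s : ℝ) / (s : ℝ)| ≤
        (A m : ℝ) * (1 + Real.log (A m)) := herr.trans herr2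
    -- rewrite the function value
    have hkey : (V (A m) m : ℝ) / (m : ℝ) -
        1 / (A m : ℝ) * ∑ s ∈ Finset.Icc 1 (A m), (Nat.totient s : ℝ) / (s : ℝ)
        = ((((V (A m) m : ℝ) + 1) - (m : ℝ) / (A m : ℝ) *
            ∑ s ∈ Finset.Icc 1 (A m), (Nat.totient s : ℝ) / (s : ℝ)) - 1) / m := by
      field_simp
      ring
    rw [hkey, Real.norm_eq_abs, abs_div, abs_of_pos hm0]
    rw [div_le_div_iff_of_pos_right hm0]
    have h3 : |(((V (A m) m : ℝ) + 1) - (m : ℝ) / (A m : ℝ) *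
        ∑ s ∈ Finset.Icc 1 (A m), (Nat.totient s : ℝ) / (s : ℝ)) - 1| ≤
        (A m : ℝ) * (1 + Real.log (A m)) + 1 := by
      calc _ ≤ |((V (A m) m : ℝ) + 1) - (m : ℝ) / (A m : ℝ) *
          ∑ s ∈ Finset.Icc 1 (A m), (Nat.totient s : ℝ) / (s : ℝ)| + 1 := by
            exact (abs_sub _ _).trans (by rw [abs_one])
      _ ≤ _ := by linarith
    refine h3.trans ?_
    have hlogA : 0 ≤ Real.log (A m) := Real.log_nonneg (by exact_mod_cast ha1)
    have hlogm : 0 ≤ Real.log m := Real.log_nonneg (by exact_mod_cast (by omega : 1 ≤ m))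
    have hlog_le : Real.log (A m) ≤ Real.log D + Real.log m := by
      calc Real.log (A m) ≤ Real.log (D * (m : ℝ) ^ (1 - ε)) :=
            Real.log_le_log ha0 hAD
      _ = Real.log D + (1 - ε) * Real.log m := by
          rw [Real.log_mul (by positivity) (ne_of_gt hrpow_pos),
            Real.log_rpow hm0]
      _ ≤ Real.log D + Real.log m := by nlinarith
    have : (A m : ℝ) * (1 + Real.log (A m)) ≤
        D * (m : ℝ) ^ (1 - ε) * (1 + Real.log D + Real.log m) := by
      refine mul_le_mul hAD (by linarith) (by linarith) (by positivity)
    linarith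
  refine squeeze_zero_norm' hsqueeze ?_
  -- the squeeze function tends to 0
  have hcomp := (tendsto_aux ε D hε).comp
    (tendsto_natCast_atTop_atTop (R := ℝ))
  refine Tendsto.congr' ?_ hcomp
  filter_upwards [eventually_ge_atTop 1] with m hm1
  have hm0 : (0 : ℝ) < m := by exact_mod_cast (by omega : 0 < m)
  have hrε : (0 : ℝ) < (m : ℝ) ^ ε := by positivity
  show D * (1 + Real.log D + Real.log m) / (m : ℝ) ^ ε + 1 / m = g m
  rw [hg]
  have hsplit : (m : ℝ) ^ (1 - ε) = (m : ℝ) / (m : ℝ) ^ ε := by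
    rw [Real.rpow_sub hm0, Real.rpow_one]
  simp only [hsplit]
  field_simp
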